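/- Let there be n agents with arbitrary nonnegative additive valuations and m = n + 1 goods. Consider the sequential allocation in which agents pick in the order 1, 2, ..., n−1, n, n: at each turn the picking agent takes a good of maximum value to them among the goods not yet taken (so agents 1 through n−1 each receive one good, and agent n receives the last two remaining goods, each chosen as a most-valued remaining good at their turns). The resulting allocation is EFX. -/

import Mathlib

open Finset

/-- The bundle of agent `k` under allocation `A`. -/
def bundle {n m : ℕ} (A : Fin m → Fin n) (k : Fin n) : Finset (Fin m) :=
  Finset.univ.filter (fun g => A g = k)

/-- Additive utility of agent `i` for a bundle `S`. -/
def util {n m : ℕ} (v : Fin n → Fin m → ℝ) (i : Fin n) (S : Finset (Fin m)) : ℝ :=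
  ∑ g ∈ S, v i g

/-- An allocation is EFX if for all agents `i, j` and every good `g ∈ A_j`,
`u_i(A_i) ≥ u_i(A_j \ {g})`. -/
def EFX {n m : ℕ} (v : Fin n → Fin m → ℝ) (A : Fin m → Fin n) : Prop :=
  ∀ i j : Fin n, ∀ g ∈ bundle A j, util v i ((bundle A j).erase g) ≤ util v i (bundle A i)

/-- with `n` agents, `m = n + 1` goods and nonnegative additive
valuations, the sequential allocation in which the agents pick in the order
`1, 2, …, n−1, n, n` (at each turn the picking agent takes a most-valued remaining
good) is EFX.

Here `pick : Equiv.Perm (Fin (n+1))` lists the goods in the order they are taken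
(`pick t` is the good taken at turn `t`), `p t` is the agent picking at turn `t`
(0-indexed: `p t = min t (n−1)`, so agents `0, …, n−2` pick once and agent `n−1`
picks at the last two turns), and the greedy hypothesis says the good taken at
turn `t` is weakly preferred by agent `p t` to every good still remaining (those
taken at later turns). The resulting allocation assigns good `pick t` to `p t`. -/
theorem roundRobin_is_EFX {n : ℕ} (hn : 0 < n)
    (v : Fin n → Fin (n + 1) → ℝ) (hv : ∀ i g, 0 ≤ v i g)
    (pick : Equiv.Perm (Fin (n + 1)))
    (p : Fin (n + 1) → Fin n) (hp : ∀ t : Fin (n + 1), (p t : ℕ) = min t (@Nat.cast (Fin (n + 1)) (Fin.NatCast.instNatCast (n + 1)) (n - 1)))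
    (hgreedy : ∀ t s : Fin (n + 1), t ≤ s → v (p t) (pick s) ≤ v (p t) (pick t)) :
    EFX v (fun g => p (pick.symm g)) := by
  have hmin : ∀ a b : Fin (n+1), ((min a b : Fin (n+1)) : ℕ) = min (a:ℕ) (b:ℕ) := by
    intro a b
    rcases le_total a b with h | h
    · rw [min_eq_left h, min_eq_left (Fin.le_def.mp h)]
    · rw [min_eq_right h, min_eq_right (Fin.le_def.mp h)]
  have h1 : ((@Nat.cast (Fin (n + 1)) (Fin.NatCast.instNatCast (n + 1)) (n - 1) : Fin (n+1)) : ℕ) = n - 1 := by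
    rw [Fin.val_natCast, Nat.mod_eq_of_lt (by omega)]
  have hp' : ∀ t : Fin (n + 1), (p t : ℕ) = min (t : ℕ) (n - 1) := by
    intro t
    rw [hp t, hmin, h1]
  clear hp
  intro i j g hg
  set A : Fin (n+1) → Fin n := fun g => p (pick.symm g) with hA
  have mono : ∀ (S T : Finset (Fin (n+1))), S ⊆ T → util v i S ≤ util v i T := by
    intro S T hST
    exact Finset.sum_le_sum_of_subset_of_nonneg hST (fun x _ _ => hv i x)
  have hiLt : (i : ℕ) < n + 1 := Nat.lt_succ_of_lt i.isLt
  set ti : Fin (n+1) := ⟨i, hiLt⟩ with hti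
  have hpti : p ti = i := by
    apply Fin.ext
    rw [hp']
    have := i.isLt
    simp [hti]
    omega
  have hmem : pick ti ∈ bundle A i := by
    simp [bundle, hA, hpti]
  have key : ∀ s : Fin (n+1), ti ≤ s → v i (pick s) ≤ util v i (bundle A i) := by
    intro s hs
    have h1 := hgreedy ti s hs
    rw [hpti] at h1
    refine h1.trans ?_
    exact Finset.single_le_sum (fun x _ => hv i x) hmem
  rcases eq_or_ne i j with rfl | hij
  · exact mono _ _ (Finset.erase_subset _ _)
  have hgj : p (pick.symm g) = j := by
    simpa [bundle, hA] using hg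
  have hjval : (j : ℕ) = min ((pick.symm g : ℕ)) (n - 1) := by
    rw [← hgj, hp']
  by_cases hcase : ((pick.symm g : ℕ)) < n - 1
  · -- j's bundle is {g}, so erasing g leaves the empty set
    have hsub : bundle A j ⊆ {g} := by
      intro h hh
      have hh' : p (pick.symm h) = j := by simpa [bundle, hA] using hh
      have e1 := hp' (pick.symm h)
      rw [hh'] at e1
      have hval : (pick.symm h : ℕ) = (pick.symm g : ℕ) := by omega
      have heq : pick.symm h = pick.symm g := Fin.ext hval
      have : h = g := by
        have := congrArg pick heq
        simpa using this
      simp [this]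
    have hemp : (bundle A j).erase g ⊆ ({g} : Finset (Fin (n+1))).erase g :=
      Finset.erase_subset_erase g hsub
    have h0 : util v i ((bundle A j).erase g) ≤ util v i (({g} : Finset (Fin (n+1))).erase g) :=
      mono _ _ hemp
    have h1 : util v i (({g} : Finset (Fin (n+1))).erase g) = 0 := by
      simp [util]
    rw [h1] at h0
    refine h0.trans ?_
    exact Finset.sum_nonneg (fun x _ => hv i x)
  · -- j is the last agent; its bundle is within {pick tn1, pick tn}
    have hjn : (j : ℕ) = n - 1 := by omega
    have hin : (i : ℕ) < n - 1 := by
      have := i.isLt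
      rcases Nat.lt_or_ge (i : ℕ) (n - 1) with h | h
      · exact h
      · exfalso; apply hij; apply Fin.ext; omega
    set tn1 : Fin (n+1) := ⟨n - 1, by omega⟩ with htn1
    set tn : Fin (n+1) := ⟨n, by omega⟩ with htn
    have hsub2 : bundle A j ⊆ {pick tn1, pick tn} := by
      intro h hh
      have hh' : p (pick.symm h) = j := by simpa [bundle, hA] using hh
      have e1 := hp' (pick.symm h)
      rw [hh'] at e1
      have hlt := (pick.symm h).isLt
      have : (pick.symm h : ℕ) = n - 1 ∨ (pick.symm h : ℕ) = n := by omega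
      rcases this with hc | hc
      · have heq : pick.symm h = tn1 := Fin.ext hc
        have : h = pick tn1 := by
          have := congrArg pick heq
          simpa using this
        simp [this]
      · have heq : pick.symm h = tn := Fin.ext hc
        have : h = pick tn := by
          have := congrArg pick heq
          simpa using this
        simp [this]
    have hti1 : ti ≤ tn1 := by
      simp only [Fin.le_def, hti, htn1]
      omega
    have hti2 : ti ≤ tn := by
      simp only [Fin.le_def, hti, htn]
      omega
    have hgmem : g = pick tn1 ∨ g = pick tn := by
      have := hsub2 hg
      simpa using this
    rcases hgmem with hgeq | hgeq
    · have hsub3 : (bundle A j).erase g ⊆ ({pick tn} : Finset (Fin (n+1))) := by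
        rw [hgeq]
        refine (Finset.erase_subset_erase _ hsub2).trans ?_
        exact Finset.erase_insert_subset _ _
      have h0 := mono _ _ hsub3
      have h1 : util v i ({pick tn} : Finset (Fin (n+1))) = v i (pick tn) := by
        simp [util]
      rw [h1] at h0
      exact h0.trans (key tn hti2)
    · have hsub3 : (bundle A j).erase g ⊆ ({pick tn1} : Finset (Fin (n+1))) := by
        rw [hgeq]
        refine (Finset.erase_subset_erase _ ?_).trans (Finset.erase_insert_subset _ _)
        rw [Finset.pair_comm] at hsub2
        exact hsub2
      have h0 := mono _ _ hsub3
      have h1 : util v i ({pick tn1} : Finset (Fin (n+1))) = v i (pick tn1) := by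
        simp [util]
      rw [h1] at h0
      exact h0.trans (key tn1 hti1)
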